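/- Let χ_0, ..., χ_{N-1} be independent complex random variables with ∑_{n=0}^{N-1} E[χ_n] = 0, |χ_n − E[χ_n]| ≤ 1 almost surely for each n, and ∑_{n=0}^{N-1} Var(χ_n) ≤ V for some V > 0. Let χ = ∑_{n=0}^{N-1} χ_n. Then for any 0 < ε ≤ V, P(|χ| ≥ √V + ε) ≤ exp(−ε²/(4V)). -/

import Mathlib

open MeasureTheory ProbabilityTheory Finset

noncomputable def Complex.abs : AbsoluteValue ℂ ℝ := NormedField.toAbsoluteValue ℂ

lemma Complex.continuous_abs : Continuous Complex.abs := continuous_norm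

lemma Complex.abs_conj (z : ℂ) : Complex.abs ((starRingEnd ℂ) z) = Complex.abs z :=
  Complex.norm_conj z

lemma Complex.sq_abs (z : ℂ) : Complex.abs z ^ 2 = Complex.normSq z := Complex.sq_norm z

lemma Complex.norm_eq_abs (z : ℂ) : ‖z‖ = Complex.abs z := rfl

private lemma exp_le_quad {x : ℝ} (hx : |x| ≤ 1) : Real.exp x ≤ 1 + x + x ^ 2 := by
  have h := Real.exp_bound hx (by norm_num : (0:ℕ) < 3)
  have hsum : (∑ m ∈ Finset.range 3, x ^ m / m.factorial) = 1 + x + x ^ 2 / 2 := by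
    simp [Finset.sum_range_succ, Nat.factorial]
  rw [hsum] at h
  have h1 := (abs_sub_le_iff.1 h).1
  have h2 : |x| ^ 3 ≤ x ^ 2 := by
    have h3 : |x| ^ 3 ≤ |x| ^ 2 := pow_le_pow_of_le_one (abs_nonneg x) hx (by norm_num)
    simpa [sq_abs] using h3
  norm_num [Nat.factorial] at h1
  nlinarith [abs_nonneg x]

private lemma indep_pair_integral {Ω : Type*} [MeasureSpace Ω]
    [IsProbabilityMeasure (volume : Measure Ω)] {A B : Ω → ℂ}
    (hA : Measurable A) (hB : Measurable B) (hAB : IndepFun A B volume)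
    {f : ℂ → ℂ → ℝ} (hf : Measurable fun p : ℂ × ℂ => f p.1 p.2)
    (hint : Integrable (fun ω => f (A ω) (B ω)) volume) :
    ∫ ω, f (A ω) (B ω) = ∫ ω, ∫ ω', f (A ω) (B ω') := by
  have hmA : IsProbabilityMeasure ((volume : Measure Ω).map A) :=
    Measure.isProbabilityMeasure_map hA.aemeasurable
  have hmB : IsProbabilityMeasure ((volume : Measure Ω).map B) :=
    Measure.isProbabilityMeasure_map hB.aemeasurable
  have hmap : (volume : Measure Ω).map (fun ω => (A ω, B ω))
      = ((volume : Measure Ω).map A).prod ((volume : Measure Ω).map B) :=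
    (indepFun_iff_map_prod_eq_prod_map_map hA.aemeasurable hB.aemeasurable).mp hAB
  have hpm : AEMeasurable (fun ω => (A ω, B ω)) (volume : Measure Ω) :=
    (hA.prodMk hB).aemeasurable
  have hfm : AEStronglyMeasurable (fun p : ℂ × ℂ => f p.1 p.2)
      ((volume : Measure Ω).map (fun ω => (A ω, B ω))) := hf.aestronglyMeasurable
  have h1 : ∫ ω, f (A ω) (B ω)
      = ∫ p : ℂ × ℂ, f p.1 p.2 ∂((volume : Measure Ω).map (fun ω => (A ω, B ω))) :=
    (integral_map hpm hfm).symm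
  have hint' : Integrable (fun p : ℂ × ℂ => f p.1 p.2)
      (((volume : Measure Ω).map A).prod ((volume : Measure Ω).map B)) := by
    rw [← hmap, integrable_map_measure hfm hpm]
    exact hint
  rw [h1, hmap, MeasureTheory.integral_prod _ hint']
  have hinner : ∀ x : ℂ, ∫ y, f x y ∂((volume : Measure Ω).map B) = ∫ ω', f x (B ω') := by
    intro x
    exact integral_map hB.aemeasurable
      ((hf.comp (measurable_prodMk_left : Measurable (Prod.mk x))).aestronglyMeasurable)
  have houter : ∫ x, (∫ y, f x y ∂((volume : Measure Ω).map B)) ∂((volume : Measure Ω).map A)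
      = ∫ ω, ∫ y, f (A ω) y ∂((volume : Measure Ω).map B) :=
    integral_map hA.aemeasurable
      (hf.stronglyMeasurable.integral_prod_right').aestronglyMeasurable
  rw [houter]
  exact integral_congr_ae (Filter.Eventually.of_forall fun ω => hinner (A ω))

private lemma mgf_aux {Ω : Type*} [MeasureSpace Ω] [IsProbabilityMeasure (volume : Measure Ω)]
    {Y : Ω → ℝ} (hY : Integrable Y (volume : Measure Ω))
    (hb : ∀ᵐ ω ∂(volume : Measure Ω), |Y ω - ∫ ω', Y ω'| ≤ 2)
    {l v : ℝ} (hl0 : 0 ≤ l) (hl : l ≤ 1/2)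
    (hv : (∫ ω, (Y ω - ∫ ω', Y ω') ^ 2) ≤ v) :
    (∫ ω, Real.exp (l * Y ω)) ≤ Real.exp (l * (∫ ω', Y ω') + l ^ 2 * v) := by
  set m := ∫ ω', Y ω' with hm
  have hD : Integrable (fun ω => Y ω - m) := hY.sub (integrable_const m)
  have hDm : (∫ ω, (Y ω - m)) = 0 := by
    rw [integral_sub hY (integrable_const m), integral_const]
    simp [hm]
  have hDsm : AEStronglyMeasurable (fun ω => (Y ω - m) ^ 2) (volume : Measure Ω) := by
    have h := hD.aestronglyMeasurable
    simpa [pow_two, Pi.mul_def] using h.mul h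
  have hD2 : Integrable (fun ω => (Y ω - m) ^ 2) := by
    refine (integrable_const (4:ℝ)).mono' hDsm ?_
    filter_upwards [hb] with ω hω
    have : (Y ω - m) ^ 2 ≤ 2 ^ 2 := by
      have := sq_abs (Y ω - m)
      nlinarith [abs_nonneg (Y ω - m)]
    simpa [Real.norm_eq_abs, abs_of_nonneg (sq_nonneg (Y ω - m))] using this.trans (by norm_num)
  have hv0 : 0 ≤ v := le_trans (integral_nonneg fun ω => sq_nonneg _) hv
  have hkey : ∀ᵐ ω ∂(volume : Measure Ω), Real.exp (l * Y ω)
      ≤ Real.exp (l * m) * (1 + l * (Y ω - m) + l ^ 2 * (Y ω - m) ^ 2) := by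
    filter_upwards [hb] with ω hω
    have h1 : |l * (Y ω - m)| ≤ 1 := by
      rw [abs_mul, abs_of_nonneg hl0]
      nlinarith
    have h2 := exp_le_quad h1
    have h3 : Real.exp (l * Y ω) = Real.exp (l * m) * Real.exp (l * (Y ω - m)) := by
      rw [← Real.exp_add]; ring_nf
    rw [h3]
    calc Real.exp (l * m) * Real.exp (l * (Y ω - m))
        ≤ Real.exp (l * m) * (1 + l * (Y ω - m) + (l * (Y ω - m)) ^ 2) :=
          mul_le_mul_of_nonneg_left h2 (Real.exp_nonneg _)
      _ = Real.exp (l * m) * (1 + l * (Y ω - m) + l ^ 2 * (Y ω - m) ^ 2) := by ring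
  have hexpint : Integrable (fun ω => Real.exp (l * Y ω)) := by
    refine (integrable_const (Real.exp (l * m + 1))).mono' ?_ ?_
    · exact (Real.continuous_exp.comp_aestronglyMeasurable
        (hY.aestronglyMeasurable.const_mul l))
    · filter_upwards [hb] with ω hω
      rw [Real.norm_eq_abs, abs_of_nonneg (Real.exp_nonneg _)]
      apply Real.exp_le_exp.2
      nlinarith [abs_le.1 hω]
  have hRint : Integrable
      (fun ω => Real.exp (l * m) * (1 + l * (Y ω - m) + l ^ 2 * (Y ω - m) ^ 2)) := by
    exact (((integrable_const (1:ℝ)).add (hD.const_mul l)).add (hD2.const_mul (l ^ 2))).const_mul _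
  calc (∫ ω, Real.exp (l * Y ω))
      ≤ ∫ ω, Real.exp (l * m) * (1 + l * (Y ω - m) + l ^ 2 * (Y ω - m) ^ 2) :=
        integral_mono_ae hexpint hRint hkey
    _ = Real.exp (l * m) * (1 + l * (∫ ω, (Y ω - m)) + l ^ 2 * (∫ ω, (Y ω - m) ^ 2)) := by
        have hI1 : Integrable (fun ω => 1 + l * (Y ω - m)) (volume : Measure Ω) := by
          have := (integrable_const (1:ℝ)).add (hD.const_mul l)
          simpa using this
        have hI2 : Integrable (fun ω => l ^ 2 * (Y ω - m) ^ 2) (volume : Measure Ω) :=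
          hD2.const_mul _
        rw [integral_const_mul, integral_add hI1 hI2, integral_add (integrable_const (1:ℝ))
          (hD.const_mul l), integral_const, integral_const_mul, integral_const_mul]
        simp
    _ ≤ Real.exp (l * m) * (1 + l ^ 2 * v) := by
        rw [hDm]
        have : l ^ 2 * (∫ ω, (Y ω - m) ^ 2) ≤ l ^ 2 * v :=
          mul_le_mul_of_nonneg_left hv (sq_nonneg l)
        have h5 := mul_le_mul_of_nonneg_left (add_le_add_left this 1) (Real.exp_nonneg (l * m))
        simpa [add_comm] using h5
    _ ≤ Real.exp (l * m) * Real.exp (l ^ 2 * v) := by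
        have := Real.add_one_le_exp (l ^ 2 * v)
        have h6 := mul_le_mul_of_nonneg_left (by linarith : 1 + l ^ 2 * v ≤ Real.exp (l ^ 2 * v))
          (Real.exp_nonneg (l * m))
        exact h6
    _ = Real.exp (l * m + l ^ 2 * v) := (Real.exp_add _ _).symm


set_option maxHeartbeats 1000000 in
/-- Corollary 1: Bernstein-type tail bound for a sum of independent bounded
complex random variables. -/
theorem stmt_7 {Ω : Type*} [MeasureSpace Ω]
    [IsProbabilityMeasure (volume : Measure Ω)]
    (N : ℕ) (χ : Fin N → Ω → ℂ)
    (hmeas : ∀ n, Measurable (χ n))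
    (hInt : ∀ n, Integrable (χ n))
    (hIndep : iIndepFun χ volume)
    (hmean : (∑ n : Fin N, ∫ ω, χ n ω) = 0)
    (hbdd : ∀ n, ∀ᵐ ω ∂(volume : Measure Ω),
      ‖χ n ω - ∫ ω', χ n ω'‖ ≤ 1)
    (V : ℝ) (hV : 0 < V)
    (hvar : (∑ n : Fin N, ∫ ω, ‖χ n ω - ∫ ω', χ n ω'‖ ^ 2) ≤ V)
    (ε : ℝ) (hε : 0 < ε) (hεV : ε ≤ V) :
    volume {ω | Real.sqrt V + ε ≤ ‖∑ n : Fin N, χ n ω‖}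
      ≤ ENNReal.ofReal (Real.exp (-ε ^ 2 / (4 * V))) := by
  classical
  set X : Fin N → Ω → ℂ := fun n ω => χ n ω - ∫ ω', χ n ω' with hXdef
  have hXmeas : ∀ n, Measurable (X n) := fun n => (hmeas n).sub measurable_const
  have hXint : ∀ n, Integrable (X n) (volume : Measure Ω) :=
    fun n => (hInt n).sub (integrable_const _)
  have hXmean : ∀ n, (∫ ω, X n ω) = 0 := by
    intro n
    rw [hXdef]
    rw [integral_sub (hInt n) (integrable_const _), integral_const]
    simp
  have hXbdd : ∀ n, ∀ᵐ ω ∂(volume : Measure Ω), Complex.abs (X n ω) ≤ 1 := fun n => hbdd n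
  have hXindep : iIndepFun X volume := by
    have h := hIndep.comp (fun n (z : ℂ) => z - ∫ ω', χ n ω')
      (fun n => measurable_id.sub measurable_const)
    exact h
  set σ2 : Fin N → ℝ := fun n => ∫ ω, Complex.abs (X n ω) ^ 2 with hσ2def
  have hσ2V : (∑ n : Fin N, σ2 n) ≤ V := hvar
  have hσ2nonneg : ∀ n, 0 ≤ σ2 n := fun n => integral_nonneg fun ω => sq_nonneg _
  set R : Finset (Fin N) → Ω → ℂ := fun s ω => ∑ n ∈ s, X n ω with hRdef
  have hRmeas : ∀ s, Measurable (R s) := fun s => Finset.measurable_sum s fun n _ => hXmeas n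
  have hRbdd : ∀ s : Finset (Fin N), ∀ᵐ ω ∂(volume : Measure Ω),
      Complex.abs (R s ω) ≤ s.card := by
    intro s
    have hall : ∀ᵐ ω ∂(volume : Measure Ω), ∀ n, Complex.abs (X n ω) ≤ 1 :=
      (ae_all_iff).2 hXbdd
    filter_upwards [hall] with ω hω
    calc Complex.abs (R s ω) ≤ ∑ n ∈ s, Complex.abs (X n ω) := by
          exact AbsoluteValue.sum_le _ _ _
      _ ≤ ∑ _n ∈ s, (1:ℝ) := Finset.sum_le_sum fun n _ => hω n
      _ = s.card := by simp
  have hXRindep : ∀ (s : Finset (Fin N)) (a : Fin N), a ∉ s →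
      IndepFun (X a) (R s) volume := by
    intro s a ha
    have h1 : IndepFun (∑ j ∈ s, X j) (X a) volume :=
      hXindep.indepFun_finsetSum_of_notMem hXmeas ha
    have h2 : R s = ∑ j ∈ s, X j := by
      funext ω; simp [hRdef]
    rw [h2]
    exact h1.symm
  set G : Finset (Fin N) → ℂ → ℝ := fun s z => ∫ ω, Complex.abs (z + R s ω) with hGdef
  have habs_meas : ∀ (s : Finset (Fin N)) (z : ℂ),
      AEStronglyMeasurable (fun ω => Complex.abs (z + R s ω)) (volume : Measure Ω) :=
    fun s z => (Complex.continuous_abs.measurable.comp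
      (measurable_const.add (hRmeas s))).aestronglyMeasurable
  have hGint : ∀ (s : Finset (Fin N)) (z : ℂ),
      Integrable (fun ω => Complex.abs (z + R s ω)) (volume : Measure Ω) := by
    intro s z
    refine (integrable_const (Complex.abs z + s.card)).mono' (habs_meas s z) ?_
    filter_upwards [hRbdd s] with ω hω
    rw [Real.norm_eq_abs, abs_of_nonneg (AbsoluteValue.nonneg _ _)]
    calc Complex.abs (z + R s ω) ≤ Complex.abs z + Complex.abs (R s ω) :=
          AbsoluteValue.add_le _ _ _
      _ ≤ Complex.abs z + s.card := by linarith
  have hGlip : ∀ (s : Finset (Fin N)) (z w : ℂ), |G s z - G s w| ≤ Complex.abs (z - w) := by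
    intro s z w
    rw [hGdef]
    simp only
    rw [← integral_sub (hGint s z) (hGint s w)]
    calc |∫ ω, (Complex.abs (z + R s ω) - Complex.abs (w + R s ω))|
        ≤ ∫ ω, |Complex.abs (z + R s ω) - Complex.abs (w + R s ω)| := by
          simpa [Real.norm_eq_abs] using
            norm_integral_le_integral_norm (μ := (volume : Measure Ω))
              (f := fun ω => Complex.abs (z + R s ω) - Complex.abs (w + R s ω))
      _ ≤ ∫ _ω, Complex.abs (z - w) := by
          refine integral_mono_ae ((hGint s z).sub (hGint s w)).abs (integrable_const _) ?_
          filter_upwards with ω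
          have h := Complex.abs.abs_abv_sub_le_abv_sub (z + R s ω) (w + R s ω)
          simpa [add_sub_add_comm] using h
      _ = Complex.abs (z - w) := by simp
  have hGmeas : ∀ s, Measurable (G s) := by
    intro s
    have hlip : LipschitzWith 1 (G s) := by
      refine LipschitzWith.of_dist_le_mul fun z w => ?_
      rw [Real.dist_eq, Complex.dist_eq]
      simpa [Complex.norm_eq_abs] using hGlip s z w
    exact hlip.continuous.measurable
  have hGnonneg : ∀ s z, 0 ≤ G s z :=
    fun s z => integral_nonneg fun ω => AbsoluteValue.nonneg _ _
  have hGub : ∀ (s : Finset (Fin N)) (z : ℂ), G s z ≤ Complex.abs z + s.card := by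
    intro s z
    rw [hGdef]
    simp only
    calc (∫ ω, Complex.abs (z + R s ω)) ≤ ∫ _ω, (Complex.abs z + s.card) := by
          refine integral_mono_ae (hGint s z) (integrable_const _) ?_
          filter_upwards [hRbdd s] with ω hω
          calc Complex.abs (z + R s ω) ≤ Complex.abs z + Complex.abs (R s ω) :=
                AbsoluteValue.add_le _ _ _
            _ ≤ Complex.abs z + s.card := by linarith
      _ = Complex.abs z + s.card := by simp
  -- second moment identity
  have hMom : ∀ (s : Finset (Fin N)) (z : ℂ),
      (∫ ω, Complex.abs (z + R s ω) ^ 2) = Complex.abs z ^ 2 + ∑ n ∈ s, σ2 n := by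
    intro s
    induction s using Finset.induction_on with
    | empty =>
      intro z
      simp [hRdef]
    | @insert a s ha ih =>
      intro z
      have hindep := hXRindep s a ha
      have hfmeas : Measurable fun p : ℂ × ℂ => Complex.abs (z + (p.1 + p.2)) ^ 2 :=
        (Complex.continuous_abs.measurable.comp
          (measurable_const.add (measurable_fst.add measurable_snd))).pow_const 2
      have hcint : Integrable (fun ω => Complex.abs (z + (X a ω + R s ω)) ^ 2)
          (volume : Measure Ω) := by
        refine (integrable_const ((Complex.abs z + (1 + (s.card:ℝ))) ^ 2)).mono'
          ((hfmeas.comp ((hXmeas a).prodMk (hRmeas s))).aestronglyMeasurable) ?_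
        filter_upwards [hXbdd a, hRbdd s] with ω h1 h2
        rw [Real.norm_eq_abs, abs_of_nonneg (sq_nonneg _)]
        have hle : Complex.abs (z + (X a ω + R s ω)) ≤ Complex.abs z + (1 + (s.card:ℝ)) := by
          have t1 := AbsoluteValue.add_le Complex.abs z (X a ω + R s ω)
          have t2 := AbsoluteValue.add_le Complex.abs (X a ω) (R s ω)
          linarith
        exact pow_le_pow_left₀ (AbsoluteValue.nonneg _ _) hle 2
      have hpair := indep_pair_integral (hXmeas a) (hRmeas s) hindep
        (f := fun x r => Complex.abs (z + (x + r)) ^ 2) hfmeas hcint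
      have hstep : (∫ ω, Complex.abs (z + R (insert a s) ω) ^ 2)
          = ∫ ω, ∫ ω', Complex.abs (z + (X a ω + R s ω')) ^ 2 := by
        have hRins : ∀ ω, R (insert a s) ω = X a ω + R s ω := fun ω => Finset.sum_insert ha
        simp only [hRins]
        exact hpair
      rw [hstep]
      have hinner : ∀ ω, (∫ ω', Complex.abs (z + (X a ω + R s ω')) ^ 2)
          = Complex.abs (z + X a ω) ^ 2 + ∑ n ∈ s, σ2 n := by
        intro ω
        simp only [← add_assoc]
        exact ih (z + X a ω)
      have hXa2int : Integrable (fun ω => Complex.abs (z + X a ω) ^ 2)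
          (volume : Measure Ω) := by
        refine (integrable_const ((Complex.abs z + 1) ^ 2)).mono'
          ((Complex.continuous_abs.measurable.comp
            (measurable_const.add (hXmeas a))).pow_const 2).aestronglyMeasurable ?_
        filter_upwards [hXbdd a] with ω h1
        rw [Real.norm_eq_abs, abs_of_nonneg (sq_nonneg _)]
        have hle : Complex.abs (z + X a ω) ≤ Complex.abs z + 1 := by
          have t1 := AbsoluteValue.add_le Complex.abs z (X a ω)
          linarith
        exact pow_le_pow_left₀ (AbsoluteValue.nonneg _ _) hle 2
      have hXabs2int : Integrable (fun ω => Complex.abs (X a ω) ^ 2)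
          (volume : Measure Ω) := by
        refine (integrable_const (1:ℝ)).mono'
          ((Complex.continuous_abs.measurable.comp (hXmeas a)).pow_const 2).aestronglyMeasurable ?_
        filter_upwards [hXbdd a] with ω h1
        rw [Real.norm_eq_abs, abs_of_nonneg (sq_nonneg _)]
        calc Complex.abs (X a ω) ^ 2 ≤ 1 ^ 2 :=
              pow_le_pow_left₀ (AbsoluteValue.nonneg _ _) h1 2
          _ = 1 := one_pow 2
      have hconjint : Integrable (fun ω => z * (starRingEnd ℂ) (X a ω))
          (volume : Measure Ω) := by
        refine (integrable_const (Complex.abs z * 1)).mono'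
          ((measurable_const.mul (Complex.continuous_conj.measurable.comp
            (hXmeas a)))).aestronglyMeasurable ?_
        filter_upwards [hXbdd a] with ω h1
        rw [Complex.norm_eq_abs, map_mul]
        have : Complex.abs ((starRingEnd ℂ) (X a ω)) = Complex.abs (X a ω) :=
          Complex.abs_conj _
        rw [this]
        exact mul_le_mul_of_nonneg_left h1 (AbsoluteValue.nonneg _ _)
      have hre0 : (∫ ω, (z * (starRingEnd ℂ) (X a ω)).re) = 0 := by
        have h0 : (∫ ω, z * (starRingEnd ℂ) (X a ω)) = 0 := by
          rw [integral_const_mul, integral_conj, hXmean a]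
          simp
        have hr := integral_re hconjint
        rw [h0] at hr
        simpa using hr
      have hsq : (∫ ω, Complex.abs (z + X a ω) ^ 2) = Complex.abs z ^ 2 + σ2 a := by
        have hpt : ∀ ω, Complex.abs (z + X a ω) ^ 2
            = (Complex.abs z ^ 2 + Complex.abs (X a ω) ^ 2)
              + 2 * (z * (starRingEnd ℂ) (X a ω)).re := by
          intro ω
          rw [Complex.sq_abs, Complex.sq_abs, Complex.sq_abs, Complex.normSq_add]
        rw [integral_congr_ae (Filter.Eventually.of_forall hpt)]
        have hreint : Integrable (fun ω => 2 * (z * (starRingEnd ℂ) (X a ω)).re)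
            (volume : Measure Ω) := by
          have : Integrable (fun ω => (z * (starRingEnd ℂ) (X a ω)).re)
              (volume : Measure Ω) := hconjint.re
          exact this.const_mul 2
        have hsum1 : Integrable (fun ω => Complex.abs z ^ 2 + Complex.abs (X a ω) ^ 2)
            (volume : Measure Ω) := (integrable_const _).add hXabs2int
        rw [integral_add hsum1 hreint, integral_add (integrable_const _) hXabs2int,
          integral_const, integral_const_mul, hre0]
        simp [hσ2def]
      calc (∫ ω, ∫ ω', Complex.abs (z + (X a ω + R s ω')) ^ 2)
          = ∫ ω, (Complex.abs (z + X a ω) ^ 2 + ∑ n ∈ s, σ2 n) :=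
            integral_congr_ae (Filter.Eventually.of_forall fun ω => hinner ω)
        _ = (∫ ω, Complex.abs (z + X a ω) ^ 2) + ∑ n ∈ s, σ2 n := by
            rw [integral_add hXa2int (integrable_const _), integral_const]
            simp
        _ = Complex.abs z ^ 2 + ∑ n ∈ insert a s, σ2 n := by
            rw [hsq, Finset.sum_insert ha]
            ring
  -- main mgf bound
  set l : ℝ := ε / (2 * V) with hldef
  have hl0 : 0 < l := div_pos hε (by linarith)
  have hl12 : l ≤ 1 / 2 := by
    rw [hldef, div_le_div_iff₀ (by linarith) (by norm_num)]
    linarith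
  have hMain : ∀ (s : Finset (Fin N)) (z : ℂ),
      (∫ ω, Real.exp (l * Complex.abs (z + R s ω)))
        ≤ Real.exp (l * G s z + l ^ 2 * ∑ n ∈ s, σ2 n) := by
    intro s
    induction s using Finset.induction_on with
    | empty =>
      intro z
      have hR0 : ∀ ω : Ω, R ∅ ω = 0 := fun ω => by simp [hRdef]
      have hG0 : G ∅ z = Complex.abs z := by
        rw [hGdef]
        simp only [hR0]
        simp
      simp only [hR0, hG0, Finset.sum_empty, add_zero, mul_zero]
      simp
    | @insert a s ha ih =>
      intro z
      have hindep := hXRindep s a ha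
      have hRins : ∀ ω, R (insert a s) ω = X a ω + R s ω := fun ω => Finset.sum_insert ha
      have hfmeas : Measurable fun p : ℂ × ℂ => Real.exp (l * Complex.abs (z + (p.1 + p.2))) :=
        Real.continuous_exp.measurable.comp
          ((Complex.continuous_abs.measurable.comp
            (measurable_const.add (measurable_fst.add measurable_snd))).const_mul l)
      have hcint : Integrable (fun ω => Real.exp (l * Complex.abs (z + (X a ω + R s ω))))
          (volume : Measure Ω) := by
        refine (integrable_const (Real.exp (l * (Complex.abs z + (1 + (s.card:ℝ)))))).mono'
          ((hfmeas.comp ((hXmeas a).prodMk (hRmeas s))).aestronglyMeasurable) ?_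
        filter_upwards [hXbdd a, hRbdd s] with ω h1 h2
        rw [Real.norm_eq_abs, abs_of_nonneg (Real.exp_nonneg _)]
        apply Real.exp_le_exp.2
        refine mul_le_mul_of_nonneg_left ?_ hl0.le
        have t1 := AbsoluteValue.add_le Complex.abs z (X a ω + R s ω)
        have t2 := AbsoluteValue.add_le Complex.abs (X a ω) (R s ω)
        linarith
      have hpair := indep_pair_integral (hXmeas a) (hRmeas s) hindep
        (f := fun x r => Real.exp (l * Complex.abs (z + (x + r)))) hfmeas hcint
      set Y : Ω → ℝ := fun ω => G s (z + X a ω) with hYdef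
      have hYmeas : Measurable Y := (hGmeas s).comp (measurable_const.add (hXmeas a))
      have hYint : Integrable Y (volume : Measure Ω) := by
        refine (integrable_const (Complex.abs z + 1 + (s.card:ℝ))).mono'
          hYmeas.aestronglyMeasurable ?_
        filter_upwards [hXbdd a] with ω h1
        rw [Real.norm_eq_abs, abs_of_nonneg (hGnonneg s _)]
        calc G s (z + X a ω) ≤ Complex.abs (z + X a ω) + s.card := hGub s _
          _ ≤ Complex.abs z + 1 + s.card := by
              have := AbsoluteValue.add_le Complex.abs z (X a ω)
              linarith
      have hYdev : ∀ᵐ ω ∂(volume : Measure Ω), |Y ω - G s z| ≤ 1 := by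
        filter_upwards [hXbdd a] with ω h1
        calc |Y ω - G s z| ≤ Complex.abs ((z + X a ω) - z) := hGlip s _ _
          _ = Complex.abs (X a ω) := by rw [add_sub_cancel_left]
          _ ≤ 1 := h1
      have habsmeas2 : Measurable fun p : ℂ × ℂ => Complex.abs (z + (p.1 + p.2)) :=
        Complex.continuous_abs.measurable.comp
          (measurable_const.add (measurable_fst.add measurable_snd))
      have habscint : Integrable (fun ω => Complex.abs (z + (X a ω + R s ω)))
          (volume : Measure Ω) := by
        refine (integrable_const (Complex.abs z + (1 + (s.card:ℝ)))).mono'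
          ((habsmeas2.comp ((hXmeas a).prodMk (hRmeas s))).aestronglyMeasurable) ?_
        filter_upwards [hXbdd a, hRbdd s] with ω h1 h2
        rw [Real.norm_eq_abs, abs_of_nonneg (AbsoluteValue.nonneg _ _)]
        have t1 := AbsoluteValue.add_le Complex.abs z (X a ω + R s ω)
        have t2 := AbsoluteValue.add_le Complex.abs (X a ω) (R s ω)
        linarith
      have habspair := indep_pair_integral (hXmeas a) (hRmeas s) hindep
        (f := fun x r => Complex.abs (z + (x + r))) habsmeas2 habscint
      have hYmean : (∫ ω, Y ω) = G (insert a s) z := by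
        have h1 : (∫ ω, Y ω) = ∫ ω, ∫ ω', Complex.abs (z + (X a ω + R s ω')) := by
          refine integral_congr_ae (Filter.Eventually.of_forall fun ω => ?_)
          rw [hYdef]
          simp only [hGdef]
          simp only [← add_assoc]
        rw [h1, ← habspair, hGdef]
        simp only [hRins]
      set c : ℝ := G s z with hcdef
      set m : ℝ := ∫ ω', Y ω' with hmdef
      have hYc : Integrable (fun ω => Y ω - c) (volume : Measure Ω) :=
        hYint.sub (integrable_const c)
      have hYcmean : (∫ ω, (Y ω - c)) = m - c := by
        rw [integral_sub hYint (integrable_const c), integral_const]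
        simp [hmdef]
      have hdmc : |m - c| ≤ 1 := by
        rw [← hYcmean]
        calc |∫ ω, (Y ω - c)| ≤ ∫ ω, |Y ω - c| := by
              simpa [Real.norm_eq_abs] using
                norm_integral_le_integral_norm (μ := (volume : Measure Ω))
                  (f := fun ω => Y ω - c)
          _ ≤ ∫ (_ω : Ω), (1:ℝ) := integral_mono_ae hYc.abs (integrable_const _) hYdev
          _ = 1 := by simp
      have hbY : ∀ᵐ ω ∂(volume : Measure Ω), |Y ω - m| ≤ 2 := by
        filter_upwards [hYdev] with ω h1
        calc |Y ω - m| ≤ |Y ω - c| + |m - c| := by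
              rw [abs_sub_comm m c]
              exact abs_sub_le _ _ _ |>.trans_eq rfl
          _ ≤ 2 := by linarith
      have hYc2int : Integrable (fun ω => (Y ω - c) ^ 2) (volume : Measure Ω) := by
        refine (integrable_const (1:ℝ)).mono' ?_ ?_
        · have h := hYc.aestronglyMeasurable
          simpa [pow_two, Pi.mul_def] using h.mul h
        · filter_upwards [hYdev] with ω h1
          rw [Real.norm_eq_abs, abs_of_nonneg (sq_nonneg _)]
          calc (Y ω - c) ^ 2 = |Y ω - c| ^ 2 := (sq_abs _).symm
            _ ≤ 1 ^ 2 := pow_le_pow_left₀ (abs_nonneg _) h1 2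
            _ = 1 := one_pow 2
      have hYm2int : Integrable (fun ω => (Y ω - m) ^ 2) (volume : Measure Ω) := by
        refine (integrable_const (4:ℝ)).mono' ?_ ?_
        · have h := (hYint.sub (integrable_const m)).aestronglyMeasurable
          simpa [pow_two, Pi.mul_def] using h.mul h
        · filter_upwards [hbY] with ω h1
          rw [Real.norm_eq_abs, abs_of_nonneg (sq_nonneg _)]
          calc (Y ω - m) ^ 2 = |Y ω - m| ^ 2 := (sq_abs _).symm
            _ ≤ 2 ^ 2 := pow_le_pow_left₀ (abs_nonneg _) h1 2
            _ = 4 := by norm_num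
      have hXabs2int : Integrable (fun ω => Complex.abs (X a ω) ^ 2)
          (volume : Measure Ω) := by
        refine (integrable_const (1:ℝ)).mono'
          ((Complex.continuous_abs.measurable.comp (hXmeas a)).pow_const 2).aestronglyMeasurable ?_
        filter_upwards [hXbdd a] with ω h1
        rw [Real.norm_eq_abs, abs_of_nonneg (sq_nonneg _)]
        calc Complex.abs (X a ω) ^ 2 ≤ 1 ^ 2 :=
              pow_le_pow_left₀ (AbsoluteValue.nonneg _ _) h1 2
          _ = 1 := one_pow 2
      have hYvar : (∫ ω, (Y ω - m) ^ 2) ≤ σ2 a := by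
        have hexpand : (∫ ω, (Y ω - m) ^ 2)
            = (∫ ω, (Y ω - c) ^ 2) - (m - c) ^ 2 := by
          have hpt : ∀ ω, (Y ω - m) ^ 2
              = (Y ω - c) ^ 2 - (2 * (m - c)) * (Y ω - c) + (m - c) ^ 2 := by
            intro ω; ring
          rw [integral_congr_ae (Filter.Eventually.of_forall hpt)]
          have hI3 : Integrable
              (fun ω => (Y ω - c) ^ 2 - 2 * (m - c) * (Y ω - c)) (volume : Measure Ω) := by
            have := hYc2int.sub (hYc.const_mul (2 * (m - c)))
            simpa [Pi.sub_def] using this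
          rw [integral_add hI3 (integrable_const ((m - c) ^ 2)),
            integral_sub hYc2int (hYc.const_mul (2 * (m - c))), integral_const_mul, hYcmean,
            integral_const]
          simp
          ring
        rw [hexpand]
        have h1 : (∫ ω, (Y ω - c) ^ 2) ≤ ∫ ω, Complex.abs (X a ω) ^ 2 := by
          refine integral_mono_ae hYc2int hXabs2int ?_
          filter_upwards with ω
          calc (Y ω - c) ^ 2 = |Y ω - c| ^ 2 := (sq_abs _).symm
            _ ≤ Complex.abs (X a ω) ^ 2 := by
                refine pow_le_pow_left₀ (abs_nonneg _) ?_ 2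
                calc |Y ω - c| ≤ Complex.abs ((z + X a ω) - z) := hGlip s _ _
                  _ = Complex.abs (X a ω) := by rw [add_sub_cancel_left]
        have h2 : (0:ℝ) ≤ (m - c) ^ 2 := sq_nonneg _
        have : (∫ ω, Complex.abs (X a ω) ^ 2) = σ2 a := rfl
        linarith
      have hmgf := mgf_aux hYint hbY hl0.le hl12 hYvar
      have hexpYint : Integrable (fun ω => Real.exp (l * Y ω)) (volume : Measure Ω) := by
        refine (integrable_const (Real.exp (l * (Complex.abs z + 1 + (s.card:ℝ))))).mono'
          (Real.continuous_exp.measurable.comp (hYmeas.const_mul l)).aestronglyMeasurable ?_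
        filter_upwards [hXbdd a] with ω h1
        rw [Real.norm_eq_abs, abs_of_nonneg (Real.exp_nonneg _)]
        apply Real.exp_le_exp.2
        refine mul_le_mul_of_nonneg_left ?_ hl0.le
        calc Y ω ≤ Complex.abs (z + X a ω) + s.card := hGub s _
          _ ≤ Complex.abs z + 1 + s.card := by
              have := AbsoluteValue.add_le Complex.abs z (X a ω)
              linarith
      calc (∫ ω, Real.exp (l * Complex.abs (z + R (insert a s) ω)))
          = ∫ ω, ∫ ω', Real.exp (l * Complex.abs (z + (X a ω + R s ω'))) := by
            simp only [hRins]
            exact hpair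
        _ ≤ ∫ ω, Real.exp (l ^ 2 * ∑ n ∈ s, σ2 n) * Real.exp (l * Y ω) := by
            refine integral_mono_of_nonneg ?_ (hexpYint.const_mul _) ?_
            · filter_upwards with ω
              exact integral_nonneg fun ω' => Real.exp_nonneg _
            · filter_upwards with ω
              have hih := ih (z + X a ω)
              calc (∫ ω', Real.exp (l * Complex.abs (z + (X a ω + R s ω'))))
                  = ∫ ω', Real.exp (l * Complex.abs ((z + X a ω) + R s ω')) := by
                    simp only [← add_assoc]
                _ ≤ Real.exp (l * G s (z + X a ω) + l ^ 2 * ∑ n ∈ s, σ2 n) := hih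
                _ = Real.exp (l ^ 2 * ∑ n ∈ s, σ2 n) * Real.exp (l * Y ω) := by
                    rw [← Real.exp_add, hYdef]
                    ring_nf
        _ = Real.exp (l ^ 2 * ∑ n ∈ s, σ2 n) * ∫ ω, Real.exp (l * Y ω) :=
            integral_const_mul _ _
        _ ≤ Real.exp (l ^ 2 * ∑ n ∈ s, σ2 n) * Real.exp (l * m + l ^ 2 * σ2 a) :=
            mul_le_mul_of_nonneg_left hmgf (Real.exp_nonneg _)
        _ = Real.exp (l * G (insert a s) z + l ^ 2 * ∑ n ∈ insert a s, σ2 n) := by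
            rw [← Real.exp_add, Finset.sum_insert ha, hYmean]
            congr 1
            ring
  -- mean bound
  have hsV : (0:ℝ) < Real.sqrt V := Real.sqrt_pos.2 hV
  have hsVsq : Real.sqrt V ^ 2 = V := Real.sq_sqrt hV.le
  have hEbd : G univ 0 ≤ Real.sqrt V := by
    have hR2int : Integrable (fun ω => Complex.abs ((0:ℂ) + R univ ω) ^ 2)
        (volume : Measure Ω) := by
      refine (integrable_const (((univ : Finset (Fin N)).card : ℝ) ^ 2)).mono'
        ((Complex.continuous_abs.measurable.comp
          (measurable_const.add (hRmeas univ))).pow_const 2).aestronglyMeasurable ?_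
      filter_upwards [hRbdd univ] with ω h1
      rw [Real.norm_eq_abs, abs_of_nonneg (sq_nonneg _)]
      refine pow_le_pow_left₀ (AbsoluteValue.nonneg _ _) ?_ 2
      simpa using h1
    have hdivhalf : V / (2 * Real.sqrt V) = Real.sqrt V / 2 := by
      rw [div_eq_div_iff (by positivity) (by norm_num)]
      nlinarith [hsVsq]
    have h1 : G univ 0 ≤ ∫ ω, (Complex.abs ((0:ℂ) + R univ ω) ^ 2 / (2 * Real.sqrt V)
        + Real.sqrt V / 2) := by
      rw [hGdef]
      refine integral_mono_ae (hGint univ 0) ((hR2int.div_const _).add (integrable_const _)) ?_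
      filter_upwards with ω
      set t := Complex.abs ((0:ℂ) + R univ ω) with ht
      have ht0 : 0 ≤ t := AbsoluteValue.nonneg _ _
      have h2 : t ≤ (t ^ 2 + V) / (2 * Real.sqrt V) := by
        rw [le_div_iff₀ (by positivity)]
        nlinarith [sq_nonneg (t - Real.sqrt V), hsVsq]
      calc t ≤ (t ^ 2 + V) / (2 * Real.sqrt V) := h2
        _ = t ^ 2 / (2 * Real.sqrt V) + Real.sqrt V / 2 := by
            rw [add_div, hdivhalf]
    have h2 : (∫ ω, (Complex.abs ((0:ℂ) + R univ ω) ^ 2 / (2 * Real.sqrt V)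
        + Real.sqrt V / 2)) = (∑ n : Fin N, σ2 n) / (2 * Real.sqrt V) + Real.sqrt V / 2 := by
      rw [integral_add (hR2int.div_const _) (integrable_const _), integral_div, hMom univ 0,
        integral_const]
      simp
    have h3 : (∑ n : Fin N, σ2 n) / (2 * Real.sqrt V) ≤ V / (2 * Real.sqrt V) := by
      gcongr
    calc G univ 0 ≤ (∑ n : Fin N, σ2 n) / (2 * Real.sqrt V) + Real.sqrt V / 2 := by
          rw [← h2]; exact h1
      _ ≤ V / (2 * Real.sqrt V) + Real.sqrt V / 2 := by linarith
      _ = Real.sqrt V := by rw [hdivhalf]; ring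
  -- conclusion
  have hTeq : ∀ ω, (∑ n : Fin N, χ n ω) = R univ ω := by
    intro ω
    rw [hRdef]
    simp only [hXdef]
    rw [Finset.sum_sub_distrib, hmean, sub_zero]
  set F : Ω → ℝ := fun ω => Real.exp (l * Complex.abs ((0:ℂ) + R univ ω)) with hFdef
  have hFint : Integrable F (volume : Measure Ω) := by
    refine (integrable_const (Real.exp (l * ((univ : Finset (Fin N)).card : ℝ)))).mono'
      (Real.continuous_exp.measurable.comp ((Complex.continuous_abs.measurable.comp
        (measurable_const.add (hRmeas univ))).const_mul l)).aestronglyMeasurable ?_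
    filter_upwards [hRbdd univ] with ω h1
    rw [Real.norm_eq_abs, abs_of_nonneg (Real.exp_nonneg _)]
    apply Real.exp_le_exp.2
    refine mul_le_mul_of_nonneg_left ?_ hl0.le
    simpa using h1
  have hFbound : (∫ ω, F ω) ≤ Real.exp (l * Real.sqrt V + l ^ 2 * V) := by
    calc (∫ ω, F ω) ≤ Real.exp (l * G univ 0 + l ^ 2 * ∑ n : Fin N, σ2 n) := hMain univ 0
      _ ≤ Real.exp (l * Real.sqrt V + l ^ 2 * V) := by
          apply Real.exp_le_exp.2
          have ha1 : l * G univ 0 ≤ l * Real.sqrt V := mul_le_mul_of_nonneg_left hEbd hl0.le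
          have ha2 : l ^ 2 * (∑ n : Fin N, σ2 n) ≤ l ^ 2 * V :=
            mul_le_mul_of_nonneg_left hσ2V (sq_nonneg l)
          linarith
  have hmarkov := mul_meas_ge_le_integral_of_nonneg
    (Filter.Eventually.of_forall fun ω => Real.exp_nonneg _ :
      0 ≤ᵐ[(volume : Measure Ω)] F) hFint (Real.exp (l * (Real.sqrt V + ε)))
  have hc : (0:ℝ) < Real.exp (l * (Real.sqrt V + ε)) := Real.exp_pos _
  have hsubset : {ω | Real.sqrt V + ε ≤ Complex.abs (∑ n : Fin N, χ n ω)}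
      ⊆ {ω | Real.exp (l * (Real.sqrt V + ε)) ≤ F ω} := by
    intro ω hω
    simp only [Set.mem_setOf_eq] at hω ⊢
    rw [hFdef]
    apply Real.exp_le_exp.2
    refine mul_le_mul_of_nonneg_left ?_ hl0.le
    rw [zero_add, ← hTeq ω]
    exact hω
  have hmeasle : (volume : Measure Ω) {ω | Real.sqrt V + ε ≤ Complex.abs (∑ n : Fin N, χ n ω)}
      ≤ (volume : Measure Ω) {ω | Real.exp (l * (Real.sqrt V + ε)) ≤ F ω} :=
    measure_mono hsubset
  have hexp5 : l * Real.sqrt V + l ^ 2 * V - l * (Real.sqrt V + ε) = -ε ^ 2 / (4 * V) := by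
    rw [hldef]
    field_simp
    ring
  have htoReal : ((volume : Measure Ω)
      {ω | Real.sqrt V + ε ≤ Complex.abs (∑ n : Fin N, χ n ω)}).toReal
      ≤ Real.exp (-ε ^ 2 / (4 * V)) := by
    have h1 : ((volume : Measure Ω)
        {ω | Real.sqrt V + ε ≤ Complex.abs (∑ n : Fin N, χ n ω)}).toReal
        ≤ ((volume : Measure Ω) {ω | Real.exp (l * (Real.sqrt V + ε)) ≤ F ω}).toReal :=
      ENNReal.toReal_mono (measure_ne_top _ _) hmeasle
    have h2 : ((volume : Measure Ω) {ω | Real.exp (l * (Real.sqrt V + ε)) ≤ F ω}).toReal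
        ≤ (∫ ω, F ω) / Real.exp (l * (Real.sqrt V + ε)) := by
      rw [le_div_iff₀ hc]
      rw [mul_comm]
      exact hmarkov
    have h3 : (∫ ω, F ω) / Real.exp (l * (Real.sqrt V + ε))
        ≤ Real.exp (l * Real.sqrt V + l ^ 2 * V) / Real.exp (l * (Real.sqrt V + ε)) := by
      gcongr
    have h4 : Real.exp (l * Real.sqrt V + l ^ 2 * V) / Real.exp (l * (Real.sqrt V + ε))
        = Real.exp (-ε ^ 2 / (4 * V)) := by
      rw [← Real.exp_sub, hexp5]
    linarith
  calc (volume : Measure Ω) {ω | Real.sqrt V + ε ≤ Complex.abs (∑ n : Fin N, χ n ω)}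
      = ENNReal.ofReal (((volume : Measure Ω)
          {ω | Real.sqrt V + ε ≤ Complex.abs (∑ n : Fin N, χ n ω)}).toReal) :=
        (ENNReal.ofReal_toReal (measure_ne_top _ _)).symm
    _ ≤ ENNReal.ofReal (Real.exp (-ε ^ 2 / (4 * V))) := ENNReal.ofReal_le_ofReal htoReal
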